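/- arXiv:1809.05563 — 5 statements merged into one kernel-verified Lean document; each statement's English description precedes it below -/
import Mathlib

section
/- Let β ≥ β₀ > 0, K₁ > 0, and let F : ℝ → ℝ be measurable with |F(x)| ≤ K₁ e^{β₀|x|} for all x ∈ ℝ. Then for every t > 0, sup_{y∈ℝ} e^{−β|y|} |∫_ℝ p_t(y−x) F(x) dx| ≤ 2 K₁ e^{β₀² t / 2}. -/
open MeasureTheory Real

/-- The one-dimensional heat (Gaussian) kernel `p_t(x) = (2πt)^{-1/2} exp(-x²/(2t))`. -/
noncomputable def heatKernel (t x : ℝ) : ℝ :=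
  (Real.sqrt (2 * Real.pi * t))⁻¹ * Real.exp (-(x ^ 2) / (2 * t))

lemma heatKernel_nonneg (t x : ℝ) : 0 ≤ heatKernel t x := by
  unfold heatKernel; positivity

lemma heatKernel_mul_exp {t : ℝ} (ht : 0 < t) (c z : ℝ) :
    heatKernel t z * Real.exp (c * z) =
      Real.exp (c ^ 2 * t / 2) * heatKernel t (z - c * t) := by
  unfold heatKernel
  rw [mul_assoc, ← Real.exp_add, mul_comm (Real.exp (c ^ 2 * t / 2)), mul_assoc,
    mul_assoc, ← Real.exp_add]
  congr 2
  field_simp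
  ring

lemma integrable_heatKernel {t : ℝ} (ht : 0 < t) :
    Integrable (fun z => heatKernel t z) := by
  have h : ∀ z : ℝ, heatKernel t z
      = (Real.sqrt (2 * Real.pi * t))⁻¹ * Real.exp (-(1 / (2 * t)) * z ^ 2) := by
    intro z
    unfold heatKernel
    congr 1
    rw [neg_div, neg_mul]
    congr 1
    field_simp
  simp_rw [h]
  exact (integrable_exp_neg_mul_sq (by positivity)).const_mul _

lemma integral_heatKernel {t : ℝ} (ht : 0 < t) :
    ∫ z : ℝ, heatKernel t z = 1 := by
  unfold heatKernel
  rw [MeasureTheory.integral_const_mul]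
  have h : ∀ z : ℝ, Real.exp (-(z ^ 2) / (2 * t)) = Real.exp (-(1 / (2 * t)) * z ^ 2) := by
    intro z; congr 1; field_simp
  simp_rw [h]
  rw [integral_gaussian]
  have h2 : Real.pi / (1 / (2 * t)) = 2 * Real.pi * t := by field_simp
  rw [h2, inv_mul_cancel₀]
  positivity

lemma integrable_heatKernel_mul_exp {t : ℝ} (ht : 0 < t) (c : ℝ) :
    Integrable (fun z => heatKernel t z * Real.exp (c * z)) := by
  simp_rw [heatKernel_mul_exp ht c]
  exact (((integrable_heatKernel ht).comp_sub_right (c * t))).const_mul _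

lemma integral_heatKernel_mul_exp {t : ℝ} (ht : 0 < t) (c : ℝ) :
    ∫ z : ℝ, heatKernel t z * Real.exp (c * z) = Real.exp (c ^ 2 * t / 2) := by
  simp_rw [heatKernel_mul_exp ht c]
  rw [MeasureTheory.integral_const_mul, integral_sub_right_eq_self (fun z => heatKernel t z),
    integral_heatKernel ht, mul_one]

lemma integrable_conv_exp {t : ℝ} (ht : 0 < t) (c y : ℝ) :
    Integrable (fun x : ℝ => heatKernel t (y - x) * Real.exp (c * x)) := by
  have h : ∀ x : ℝ, heatKernel t (y - x) * Real.exp (c * x)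
      = Real.exp (c * y) * (heatKernel t (y - x) * Real.exp (-c * (y - x))) := by
    intro x
    rw [← mul_assoc, mul_comm (Real.exp (c*y)), mul_assoc, ← Real.exp_add]
    ring_nf
  simp_rw [h]
  exact (((integrable_heatKernel_mul_exp ht (-c)).comp_sub_left y)).const_mul _

lemma integral_conv_exp {t : ℝ} (ht : 0 < t) (c y : ℝ) :
    ∫ x : ℝ, heatKernel t (y - x) * Real.exp (c * x)
      = Real.exp (c * y) * Real.exp (c ^ 2 * t / 2) := by
  have h : ∀ x : ℝ, heatKernel t (y - x) * Real.exp (c * x)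
      = Real.exp (c * y) * (heatKernel t (y - x) * Real.exp (-c * (y - x))) := by
    intro x
    rw [← mul_assoc, mul_comm (Real.exp (c*y)), mul_assoc, ← Real.exp_add]
    ring_nf
  simp_rw [h]
  rw [MeasureTheory.integral_const_mul,
    integral_sub_left_eq_self (fun z => heatKernel t z * Real.exp (-c * z)) volume y,
    integral_heatKernel_mul_exp ht (-c)]
  ring_nf

/-- Let `β ≥ β₀ > 0`, `K₁ > 0` and let `F : ℝ → ℝ` be measurable with
`|F x| ≤ K₁ e^{β₀ |x|}` for all `x`.  Then for every `t > 0`,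
`sup_{y ∈ ℝ} e^{-β |y|} |∫_ℝ p_t(y - x) F x dx| ≤ 2 K₁ e^{β₀² t / 2}`. -/
theorem heatKernel_conv_sup_le (β β₀ K₁ : ℝ) (hβ₀ : 0 < β₀) (hβ : β₀ ≤ β) (hK₁ : 0 < K₁)
    (F : ℝ → ℝ) (hFmeas : Measurable F)
    (hF : ∀ x : ℝ, |F x| ≤ K₁ * Real.exp (β₀ * |x|)) (t : ℝ) (ht : 0 < t) :
    (⨆ y : ℝ, Real.exp (-β * |y|) * |∫ x : ℝ, heatKernel t (y - x) * F x|) ≤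
      2 * K₁ * Real.exp (β₀ ^ 2 * t / 2) := by
  apply ciSup_le
  intro y
  -- the dominating function
  set G : ℝ → ℝ := fun x => K₁ * (heatKernel t (y - x) * Real.exp (β₀ * x)
      + heatKernel t (y - x) * Real.exp (-β₀ * x)) with hG
  have hGint : Integrable G :=
    (((integrable_conv_exp ht β₀ y).add (integrable_conv_exp ht (-β₀) y)).const_mul K₁)
  have hbound : ∀ x : ℝ, |heatKernel t (y - x) * F x| ≤ G x := by
    intro x
    rw [abs_mul, abs_of_nonneg (heatKernel_nonneg t _)]
    have h1 : heatKernel t (y - x) * |F x|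
        ≤ heatKernel t (y - x) * (K₁ * Real.exp (β₀ * |x|)) :=
      mul_le_mul_of_nonneg_left (hF x) (heatKernel_nonneg t _)
    refine h1.trans ?_
    have h2 : Real.exp (β₀ * |x|) ≤ Real.exp (β₀ * x) + Real.exp (-β₀ * x) := by
      rcases abs_cases x with ⟨h, _⟩ | ⟨h, _⟩
      · rw [h]; linarith [Real.exp_pos (-β₀ * x)]
      · rw [h, mul_neg, ← neg_mul]; linarith [Real.exp_pos (β₀ * x)]
    have := mul_le_mul_of_nonneg_left h2
      (mul_nonneg (heatKernel_nonneg t (y - x)) hK₁.le)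
    calc heatKernel t (y - x) * (K₁ * Real.exp (β₀ * |x|))
        = heatKernel t (y - x) * K₁ * Real.exp (β₀ * |x|) := by ring
      _ ≤ heatKernel t (y - x) * K₁ * (Real.exp (β₀ * x) + Real.exp (-β₀ * x)) := this
      _ = G x := by simp only [hG]; ring
  have hmeas : AEStronglyMeasurable (fun x : ℝ => heatKernel t (y - x) * F x) volume := by
    apply Measurable.aestronglyMeasurable
    apply Measurable.mul _ hFmeas
    unfold heatKernel
    exact (measurable_const.mul (((measurable_const.sub measurable_id).pow_const 2).neg.div_const
      _).exp)
  have habs : |∫ x : ℝ, heatKernel t (y - x) * F x| ≤ ∫ x : ℝ, G x := by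
    calc |∫ x : ℝ, heatKernel t (y - x) * F x|
        ≤ ∫ x : ℝ, |heatKernel t (y - x) * F x| := by
          have := norm_integral_le_integral_norm (μ := volume)
            fun x : ℝ => heatKernel t (y - x) * F x
          simpa only [Real.norm_eq_abs] using this
      _ ≤ ∫ x : ℝ, G x := by
          apply integral_mono_of_nonneg (ae_of_all _ fun x => abs_nonneg _) hGint
          exact ae_of_all _ hbound
  have hGval : ∫ x : ℝ, G x = K₁ * (Real.exp (β₀ * y) * Real.exp (β₀ ^ 2 * t / 2)
      + Real.exp (-β₀ * y) * Real.exp (β₀ ^ 2 * t / 2)) := by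
    rw [hG]
    rw [MeasureTheory.integral_const_mul,
      integral_add (integrable_conv_exp ht β₀ y) (integrable_conv_exp ht (-β₀) y),
      integral_conv_exp ht β₀ y, integral_conv_exp ht (-β₀) y]
    ring_nf
  -- finish
  have hexp1 : Real.exp (β₀ * y) ≤ Real.exp (β₀ * |y|) :=
    Real.exp_le_exp.mpr (mul_le_mul_of_nonneg_left (le_abs_self y) hβ₀.le)
  have hexp2 : Real.exp (-β₀ * y) ≤ Real.exp (β₀ * |y|) := by
    apply Real.exp_le_exp.mpr
    rw [neg_mul, ← mul_neg]
    exact mul_le_mul_of_nonneg_left (neg_le_abs y) hβ₀.le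
  have hE : (0:ℝ) < Real.exp (β₀ ^ 2 * t / 2) := Real.exp_pos _
  have hGle : ∫ x : ℝ, G x ≤ 2 * K₁ * Real.exp (β₀ * |y|) * Real.exp (β₀ ^ 2 * t / 2) := by
    rw [hGval]
    nlinarith [mul_le_mul_of_nonneg_right hexp1 hE.le,
      mul_le_mul_of_nonneg_right hexp2 hE.le, hK₁.le,
      mul_le_mul_of_nonneg_left (mul_le_mul_of_nonneg_right hexp1 hE.le) hK₁.le,
      mul_le_mul_of_nonneg_left (mul_le_mul_of_nonneg_right hexp2 hE.le) hK₁.le]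
  calc Real.exp (-β * |y|) * |∫ x : ℝ, heatKernel t (y - x) * F x|
      ≤ Real.exp (-β * |y|) * (2 * K₁ * Real.exp (β₀ * |y|) * Real.exp (β₀ ^ 2 * t / 2)) :=
        mul_le_mul_of_nonneg_left (habs.trans hGle) (Real.exp_pos _).le
    _ = (Real.exp (-β * |y|) * Real.exp (β₀ * |y|)) * (2 * K₁ * Real.exp (β₀ ^ 2 * t / 2)) := by
        ring
    _ ≤ 1 * (2 * K₁ * Real.exp (β₀ ^ 2 * t / 2)) := by
        apply mul_le_mul_of_nonneg_right _ (by positivity)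
        rw [← Real.exp_add]
        apply Real.exp_le_one_iff.mpr  -- exp x ≤ 1 ↔ x ≤ 0
        nlinarith [abs_nonneg y]
    _ = 2 * K₁ * Real.exp (β₀ ^ 2 * t / 2) := one_mul _
end

section
/- For every β₁ > 0 and T > 0 there exists a constant K = K(β₁, T) such that for all 0 ≤ t₂ ≤ t₁ ≤ T and all y ∈ ℝ, ∫_{t₂}^{t₁} ∫_ℝ p_{t₁−s}(y−x)² e^{2β₁|x|} dx ds ≤ K e^{2β₁|y|} (t₁ − t₂)^{1/2}. -/
open MeasureTheory Real

/-- Key inner bound: for `0 < τ`, the spatial integral is at most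
`exp(2β₁²τ) * exp(2β₁|y|) / √τ`. -/
lemma heatKernel_inner_bound (β₁ τ y : ℝ) (hβ : 0 < β₁) (hτ : 0 < τ) :
    (∫ x : ℝ, heatKernel τ (y - x) ^ 2 * Real.exp (2 * β₁ * |x|)) ≤
      Real.exp (2 * β₁ ^ 2 * τ) * Real.exp (2 * β₁ * |y|) * (Real.sqrt τ)⁻¹ := by
  have hπ := Real.pi_gt_three
  have h2πτ : (0:ℝ) < 2 * Real.pi * τ := by positivity
  have hb : (0:ℝ) < (2 * τ)⁻¹ := by positivity
  set A : ℝ := (2 * Real.pi * τ)⁻¹ * Real.exp (2 * β₁ ^ 2 * τ) * Real.exp (2 * β₁ * |y|)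
    with hA
  have hA0 : 0 ≤ A := by positivity
  have hg_int : Integrable (fun x : ℝ => A * Real.exp (-(2*τ)⁻¹ * (y - x) ^ 2)) :=
    ((integrable_exp_neg_mul_sq hb).comp_sub_left y).const_mul A
  have hexp2 : ∀ a : ℝ, Real.exp a ^ 2 = Real.exp (2 * a) := by
    intro a; rw [sq, ← Real.exp_add, two_mul]
  have hfg : ∀ x : ℝ, heatKernel τ (y - x) ^ 2 * Real.exp (2 * β₁ * |x|) ≤
      A * Real.exp (-(2*τ)⁻¹ * (y - x) ^ 2) := by
    intro x
    have hz : |x| ≤ |y| + |y - x| := by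
      have : x = y - (y - x) := by ring
      calc |x| = |y - (y - x)| := by rw [← this]
        _ ≤ |y| + |y - x| := abs_sub _ _
    have hsq : 0 ≤ (|y - x| - 2 * β₁ * τ) ^ 2 := sq_nonneg _
    have habs : (y - x) ^ 2 = |y - x| ^ 2 := (sq_abs _).symm
    have hkey : 2 * (-((y-x) ^ 2) / (2 * τ)) + 2 * β₁ * |x| ≤
        2 * β₁ ^ 2 * τ + 2 * β₁ * |y| + (-(2*τ)⁻¹ * (y - x) ^ 2) := by
      have h1 : 2 * β₁ * |x| ≤ 2 * β₁ * |y| + 2 * β₁ * |y - x| := by nlinarith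
      have h2 : 2 * β₁ * |y - x| ≤ 2 * β₁ ^ 2 * τ + (y - x) ^ 2 * (2*τ)⁻¹ := by
        rw [habs, ← sub_nonneg]
        obtain ⟨z, hzabs, hznn⟩ : ∃ z : ℝ, |y - x| = z ∧ 0 ≤ z :=
          ⟨|y - x|, rfl, abs_nonneg _⟩
        rw [hzabs]
        have expand : 2 * β₁ ^ 2 * τ + z ^ 2 * (2*τ)⁻¹ - 2 * β₁ * z
            = (z - 2 * β₁ * τ) ^ 2 * (2*τ)⁻¹ := by
          field_simp
          ring
        rw [expand]
        positivity
      have h3 : 2 * (-((y-x) ^ 2) / (2 * τ)) = -(2*τ)⁻¹ * (y-x)^2 + (-(2*τ)⁻¹ * (y-x)^2) := by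
        field_simp
        ring
      linarith
    have lhs_eq : heatKernel τ (y - x) ^ 2 * Real.exp (2 * β₁ * |x|)
        = (2 * Real.pi * τ)⁻¹
          * Real.exp (2 * (-((y-x) ^ 2) / (2 * τ)) + 2 * β₁ * |x|) := by
      unfold heatKernel
      rw [mul_pow, inv_pow, Real.sq_sqrt h2πτ.le, hexp2, Real.exp_add]
      ring
    have rhs_eq : A * Real.exp (-(2*τ)⁻¹ * (y - x) ^ 2)
        = (2 * Real.pi * τ)⁻¹
          * Real.exp (2 * β₁ ^ 2 * τ + 2 * β₁ * |y| + (-(2*τ)⁻¹ * (y - x) ^ 2)) := by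
      rw [hA, Real.exp_add, Real.exp_add]
      ring
    rw [lhs_eq, rhs_eq]
    exact mul_le_mul_of_nonneg_left (Real.exp_le_exp.2 hkey) (by positivity)
  have hmono : (∫ x : ℝ, heatKernel τ (y - x) ^ 2 * Real.exp (2 * β₁ * |x|)) ≤
      ∫ x : ℝ, A * Real.exp (-(2*τ)⁻¹ * (y - x) ^ 2) := by
    apply integral_mono_of_nonneg (ae_of_all _ fun x => by positivity) hg_int
      (ae_of_all _ hfg)
  have hgauss : (∫ x : ℝ, A * Real.exp (-(2*τ)⁻¹ * (y - x) ^ 2))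
      = A * Real.sqrt (2 * Real.pi * τ) := by
    rw [integral_const_mul, integral_sub_left_eq_self
      (fun x : ℝ => Real.exp (-(2*τ)⁻¹ * x ^ 2)) volume y, integral_gaussian]
    congr 1
    rw [div_eq_mul_inv, inv_inv]
    ring
  refine hmono.trans (le_of_eq_of_le hgauss ?_)
  rw [hA]
  have h1 : (2 * Real.pi * τ)⁻¹ * Real.sqrt (2 * Real.pi * τ) = (Real.sqrt (2 * Real.pi * τ))⁻¹ := by
    rw [inv_mul_eq_div, Real.sqrt_div_self', one_div]
  have h2 : (Real.sqrt (2 * Real.pi * τ))⁻¹ ≤ (Real.sqrt τ)⁻¹ := by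
    apply inv_anti₀ (Real.sqrt_pos.2 hτ)
    apply Real.sqrt_le_sqrt
    nlinarith
  calc (2 * Real.pi * τ)⁻¹ * Real.exp (2 * β₁ ^ 2 * τ) * Real.exp (2 * β₁ * |y|)
        * Real.sqrt (2 * Real.pi * τ)
      = Real.exp (2 * β₁ ^ 2 * τ) * Real.exp (2 * β₁ * |y|)
        * ((2 * Real.pi * τ)⁻¹ * Real.sqrt (2 * Real.pi * τ)) := by ring
    _ = Real.exp (2 * β₁ ^ 2 * τ) * Real.exp (2 * β₁ * |y|)
        * (Real.sqrt (2 * Real.pi * τ))⁻¹ := by rw [h1]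
    _ ≤ Real.exp (2 * β₁ ^ 2 * τ) * Real.exp (2 * β₁ * |y|) * (Real.sqrt τ)⁻¹ := by
        apply mul_le_mul_of_nonneg_left h2 (by positivity)

/-- For every `β₁ > 0` and `T > 0` there is a constant `K = K(β₁, T)` such that for all
`0 ≤ t₂ ≤ t₁ ≤ T` and all `y ∈ ℝ`,
`∫_{t₂}^{t₁} ∫_ℝ p_{t₁ - s}(y - x)² e^{2 β₁ |x|} dx ds ≤ K e^{2 β₁ |y|} (t₁ - t₂)^{1/2}`. -/
theorem heatKernel_sq_time_integral_le (β₁ T : ℝ) (hβ₁ : 0 < β₁) (hT : 0 < T) :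
    ∃ K : ℝ, ∀ t₂ t₁ y : ℝ, 0 ≤ t₂ → t₂ ≤ t₁ → t₁ ≤ T →
      (∫ s in t₂..t₁, ∫ x : ℝ, (heatKernel (t₁ - s) (y - x)) ^ 2 * Real.exp (2 * β₁ * |x|)) ≤
        K * Real.exp (2 * β₁ * |y|) * Real.sqrt (t₁ - t₂) := by
  refine ⟨2 * Real.exp (2 * β₁ ^ 2 * T), fun t₂ t₁ y h0 h12 h1T => ?_⟩
  set D : ℝ := Real.exp (2 * β₁ ^ 2 * T) * Real.exp (2 * β₁ * |y|) with hD
  set F : ℝ → ℝ := fun s => ∫ x : ℝ, (heatKernel (t₁ - s) (y - x)) ^ 2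
    * Real.exp (2 * β₁ * |x|) with hF
  set G : ℝ → ℝ := fun s => D * (t₁ - s) ^ (-(1:ℝ)/2) with hG
  have hGint : IntervalIntegrable G volume t₂ t₁ := by
    have h1 : IntervalIntegrable (fun u : ℝ => u ^ (-(1:ℝ)/2)) volume 0 (t₁ - t₂) :=
      intervalIntegral.intervalIntegrable_rpow' (by norm_num)
    have h2 := (h1.comp_sub_left t₁).symm
    simp only [sub_zero, sub_sub_cancel] at h2
    exact h2.const_mul D
  have hFG : ∀ s ∈ Set.Ioc t₂ t₁, F s ≤ G s := by
    intro s hs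
    rcases eq_or_lt_of_le hs.2 with h | h
    · -- s = t₁ : both sides are 0
      have hτ0 : t₁ - s = 0 := by rw [h]; ring
      have hFz : F s = 0 := by
        simp only [hF, hτ0]
        have : ∀ x : ℝ, heatKernel 0 (y - x) ^ 2 * Real.exp (2 * β₁ * |x|) = 0 := by
          intro x
          unfold heatKernel
          simp
        simp [this]
      have hGz : G s = 0 := by
        simp only [hG, hτ0]
        rw [Real.zero_rpow (by norm_num), mul_zero]
      rw [hFz, hGz]
    · have hτ : 0 < t₁ - s := by linarith
      have hτT : t₁ - s ≤ T := by linarith [hs.1, h0]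
      have := heatKernel_inner_bound β₁ (t₁ - s) y hβ₁ hτ
      have hstep : Real.exp (2 * β₁ ^ 2 * (t₁ - s)) * Real.exp (2 * β₁ * |y|)
          * (Real.sqrt (t₁ - s))⁻¹ ≤ D * (t₁ - s) ^ (-(1:ℝ)/2) := by
        rw [hD]
        have hrpow : (t₁ - s) ^ (-(1:ℝ)/2) = (Real.sqrt (t₁ - s))⁻¹ := by
          rw [Real.sqrt_eq_rpow, ← Real.rpow_neg hτ.le]
          norm_num
        rw [hrpow]
        apply mul_le_mul_of_nonneg_right _ (by positivity)
        apply mul_le_mul_of_nonneg_right _ (by positivity)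
        apply Real.exp_le_exp.2
        nlinarith
      exact this.trans hstep
  have hFnn : ∀ s : ℝ, 0 ≤ F s := fun s => integral_nonneg fun x => by positivity
  have hmain : (∫ s in t₂..t₁, F s) ≤ ∫ s in t₂..t₁, G s := by
    rw [intervalIntegral.integral_of_le h12, intervalIntegral.integral_of_le h12]
    apply integral_mono_of_nonneg (ae_of_all _ hFnn)
    · rw [intervalIntegrable_iff, Set.uIoc_of_le h12] at hGint
      exact hGint
    · filter_upwards [ae_restrict_mem measurableSet_Ioc] with s hs
      exact hFG s hs
  have hGval : (∫ s in t₂..t₁, G s) = D * (2 * Real.sqrt (t₁ - t₂)) := by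
    rw [hG]
    rw [intervalIntegral.integral_const_mul]
    rw [intervalIntegral.integral_comp_sub_left (fun u : ℝ => u ^ (-(1:ℝ)/2)) t₁]
    rw [sub_self]
    rw [integral_rpow (Or.inl (by norm_num))]
    have : -(1:ℝ)/2 + 1 = 1/2 := by norm_num
    rw [this]
    rw [Real.zero_rpow (by norm_num)]
    rw [← Real.sqrt_eq_rpow]
    ring
  calc (∫ s in t₂..t₁, F s) ≤ ∫ s in t₂..t₁, G s := hmain
    _ = D * (2 * Real.sqrt (t₁ - t₂)) := hGval
    _ = 2 * Real.exp (2 * β₁ ^ 2 * T) * Real.exp (2 * β₁ * |y|) * Real.sqrt (t₁ - t₂) := by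
        rw [hD]; ring
end

section
/- For every β₁ > 0, T > 0 and α ∈ (0, 1/2) there exists a constant K = K(β₁, T, α) such that for all 0 < t₂ ≤ t₁ ≤ T and all y ∈ ℝ, ∫_0^{t₂} ∫_ℝ |p_{t₁−s}(y−x) − p_{t₂−s}(y−x)|² e^{2β₁|x|} dx ds ≤ K e^{2β₁|y|} (t₁ − t₂)^{α}. -/
open MeasureTheory Real

/-- elementary: x² ≤ 4 eˣ for x ≥ 0 -/
lemma sq_le_four_exp {x : ℝ} (hx : 0 ≤ x) : x ^ 2 ≤ 4 * Real.exp x := by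
  have h := Real.add_one_le_exp (x / 2)
  have h2 : Real.exp x = Real.exp (x / 2) * Real.exp (x / 2) := by
    rw [← Real.exp_add]; ring_nf
  nlinarith [Real.exp_pos (x/2)]

/-- weight absorption: e^{2β|u|} e^{-cu²} ≤ e^{2β²/c} e^{-cu²/2} -/
lemma exp_weight_bound (β c u : ℝ) (hβ : 0 ≤ β) (hc : 0 < c) :
    Real.exp (2 * β * |u|) * Real.exp (-(c * u ^ 2)) ≤
      Real.exp (2 * β ^ 2 / c) * Real.exp (-(c / 2 * u ^ 2)) := by
  rw [← Real.exp_add, ← Real.exp_add]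
  apply Real.exp_le_exp.2
  rw [← sq_abs u]
  have key : 2 * β * |u| - c / 2 * |u| ^ 2 ≤ 2 * β ^ 2 / c := by
    rw [le_div_iff₀ hc]; nlinarith [sq_nonneg (2 * β - c * |u|), abs_nonneg u]
  linarith

/-- generic comparison to a gaussian: integrability -/
lemma gauss_integrable {f : ℝ → ℝ} (hm : AEStronglyMeasurable f volume) {c A : ℝ}
    (hc : 0 < c) (h0 : ∀ x, 0 ≤ f x) (hle : ∀ x, f x ≤ A * Real.exp (-(c * x ^ 2))) :
    Integrable f := by
  have hg : Integrable (fun x : ℝ => A * Real.exp (-(c * x ^ 2))) := by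
    simpa [neg_mul] using (integrable_exp_neg_mul_sq hc).const_mul A
  refine hg.mono' hm ?_
  filter_upwards with x
  rw [Real.norm_eq_abs, abs_of_nonneg (h0 x)]
  exact hle x

/-- generic comparison to a gaussian: integral bound -/
lemma gauss_integral_le {f : ℝ → ℝ} (hm : AEStronglyMeasurable f volume) {c A : ℝ}
    (hc : 0 < c) (h0 : ∀ x, 0 ≤ f x) (hle : ∀ x, f x ≤ A * Real.exp (-(c * x ^ 2))) :
    ∫ x, f x ≤ A * Real.sqrt (π / c) := by
  have hInt : Integrable f := gauss_integrable hm hc h0 hle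
  calc ∫ x, f x ≤ ∫ x, A * Real.exp (-(c * x ^ 2)) :=
        integral_mono hInt (by simpa [neg_mul] using (integrable_exp_neg_mul_sq hc).const_mul A) hle
    _ = A * Real.sqrt (π / c) := by
        rw [integral_const_mul]
        congr 1
        simpa [neg_mul] using integral_gaussian c

lemma heatKernel_continuous (t : ℝ) (ht : 0 < t) :
    Continuous (fun x => heatKernel t x) := by
  unfold heatKernel
  fun_prop

/-- squared kernel with weight, pointwise gaussian domination -/
lemma heatKernel_sq_weight_le (β T t : ℝ) (hβ : 0 ≤ β) (ht : 0 < t) (htT : t ≤ T) (u : ℝ) :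
    (heatKernel t u) ^ 2 * Real.exp (2 * β * |u|) ≤
      (2 * π * t)⁻¹ * Real.exp (2 * β ^ 2 * T) * Real.exp (-(1 / (2 * t) * u ^ 2)) := by
  have hsq : (heatKernel t u) ^ 2 =
      (2 * π * t)⁻¹ * Real.exp (-(1 / t * u ^ 2)) := by
    unfold heatKernel
    rw [mul_pow, ← Real.exp_nat_mul, ← Real.sqrt_inv, Real.sq_sqrt (by positivity)]
    congr 1
    field_simp
    ring
  calc (heatKernel t u) ^ 2 * Real.exp (2 * β * |u|)
      = (2 * π * t)⁻¹ * (Real.exp (2 * β * |u|) * Real.exp (-(1 / t * u ^ 2))) := by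
        rw [hsq]; ring
    _ ≤ (2 * π * t)⁻¹ * (Real.exp (2 * β ^ 2 / (1 / t)) * Real.exp (-(1 / t / 2 * u ^ 2))) := by
        have := exp_weight_bound β (1 / t) u hβ (by positivity)
        have h0 : (0:ℝ) ≤ (2 * π * t)⁻¹ := by positivity
        exact mul_le_mul_of_nonneg_left this h0
    _ ≤ (2 * π * t)⁻¹ * Real.exp (2 * β ^ 2 * T) * Real.exp (-(1 / (2 * t) * u ^ 2)) := by
        have e1 : 2 * β ^ 2 / (1 / t) = 2 * β ^ 2 * t := by field_simp
        have e2 : 1 / t / 2 = 1 / (2 * t) := by ring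
        rw [e1, e2]
        have h3 : Real.exp (2 * β ^ 2 * t) ≤ Real.exp (2 * β ^ 2 * T) :=
          Real.exp_le_exp.2 (by nlinarith)
        have h0 : (0:ℝ) ≤ (2 * π * t)⁻¹ := by positivity
        have h4 := mul_le_mul_of_nonneg_right
          (mul_le_mul_of_nonneg_left h3 h0) (Real.exp_pos (-(1 / (2 * t) * u ^ 2))).le
        linarith

lemma heatKernel_sq_weight_integrable (β t : ℝ) (hβ : 0 ≤ β) (ht : 0 < t) :
    Integrable (fun u => heatKernel t u ^ 2 * Real.exp (2 * β * |u|)) := by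
  exact gauss_integrable
    (((heatKernel_continuous t ht).pow 2).mul
      (Real.continuous_exp.comp (continuous_const.mul continuous_abs))).aestronglyMeasurable
    (c := 1 / (2 * t)) (A := (2 * π * t)⁻¹ * Real.exp (2 * β ^ 2 * t))
    (by positivity) (fun x => by positivity)
    (fun x => heatKernel_sq_weight_le β t t hβ ht le_rfl x)

lemma heatKernel_sq_weight_integral_le (β T t : ℝ) (hβ : 0 ≤ β) (ht : 0 < t) (htT : t ≤ T) :
    ∫ u, heatKernel t u ^ 2 * Real.exp (2 * β * |u|) ≤
      (Real.exp (2 * β ^ 2 * T) / Real.sqrt (2 * π)) * t ^ (-(1/2) : ℝ) := by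
  have hπ : (0:ℝ) < 2 * π := by positivity
  have h := gauss_integral_le (f := fun u => heatKernel t u ^ 2 * Real.exp (2 * β * |u|))
    (c := 1 / (2 * t)) (A := (2 * π * t)⁻¹ * Real.exp (2 * β ^ 2 * T))
    ((((heatKernel_continuous t ht).pow 2).mul
      (Real.continuous_exp.comp (continuous_const.mul continuous_abs))).aestronglyMeasurable)
    (by positivity) (fun x => by positivity)
    (fun x => heatKernel_sq_weight_le β T t hβ ht htT x)
  refine h.trans (le_of_eq ?_)
  have e1 : π / (1 / (2 * t)) = 2 * π * t := by field_simp
  rw [e1]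
  have e2 : Real.sqrt (2 * π * t) = Real.sqrt (2 * π) * Real.sqrt t := by
    rw [Real.sqrt_mul hπ.le]
  have e3 : t ^ (-(1/2) : ℝ) = (Real.sqrt t)⁻¹ := by
    rw [Real.sqrt_eq_rpow, ← Real.rpow_neg ht.le]
  rw [e2, e3]
  have hst : Real.sqrt t * Real.sqrt t = t := Real.mul_self_sqrt ht.le
  have hsp : Real.sqrt (2 * π) * Real.sqrt (2 * π) = 2 * π := Real.mul_self_sqrt hπ.le
  have hstpos : 0 < Real.sqrt t := Real.sqrt_pos.2 ht
  have hsppos : 0 < Real.sqrt (2 * π) := Real.sqrt_pos.2 hπ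
  rw [show (2*π*t) = (Real.sqrt (2*π) * Real.sqrt t) * (Real.sqrt (2*π) * Real.sqrt t) from by
    rw [mul_mul_mul_comm, hsp, hst]]
  field_simp

lemma hasDerivAt_heatKernel (u t : ℝ) (ht : 0 < t) :
    HasDerivAt (fun t => heatKernel t u)
      (heatKernel t u * (u ^ 2 / (2 * t ^ 2) - 1 / (2 * t))) t := by
  have h2πt : (0:ℝ) < 2 * π * t := by positivity
  have hs : Real.sqrt (2 * π * t) ≠ 0 := (Real.sqrt_pos.2 h2πt).ne'
  have h1 : HasDerivAt (fun t : ℝ => 2 * π * t) (2 * π) t := by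
    simpa using (hasDerivAt_id t).const_mul (2 * π)
  have h2 : HasDerivAt (fun t : ℝ => Real.sqrt (2 * π * t))
      (1 / (2 * Real.sqrt (2 * π * t)) * (2 * π)) t :=
    (Real.hasDerivAt_sqrt h2πt.ne').comp t h1
  have h3 : HasDerivAt (fun t : ℝ => (Real.sqrt (2 * π * t))⁻¹)
      (-(1 / (2 * Real.sqrt (2 * π * t)) * (2 * π)) / (Real.sqrt (2 * π * t)) ^ 2) t :=
    h2.inv hs
  have h4 : HasDerivAt (fun t : ℝ => -(u ^ 2) / (2 * t)) (u ^ 2 / (2 * t ^ 2)) t := by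
    have hfun : (fun t : ℝ => -(u ^ 2) / (2 * t)) = fun t : ℝ => (-(u ^ 2) / 2) * t⁻¹ := by
      funext t; ring
    rw [hfun]
    have := (hasDerivAt_inv ht.ne').const_mul (-(u ^ 2) / 2)
    exact this.congr_deriv (by ring)
  have h5 : HasDerivAt (fun t : ℝ => Real.exp (-(u ^ 2) / (2 * t)))
      (Real.exp (-(u ^ 2) / (2 * t)) * (u ^ 2 / (2 * t ^ 2))) t := h4.exp
  have h6 := h3.mul h5
  have hKdef : ∀ t, heatKernel t u =
      (Real.sqrt (2 * π * t))⁻¹ * Real.exp (-(u ^ 2) / (2 * t)) := fun _ => rfl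
  have h6' : HasDerivAt (fun t => heatKernel t u) _ t := h6
  convert h6' using 1
  rw [hKdef]
  rw [Real.sq_sqrt h2πt.le]
  field_simp
  ring

lemma heatKernel_deriv_bound (u b t : ℝ) (hb : 0 < b) (hbt : b ≤ t) (ht2 : t ≤ 2 * b) :
    |heatKernel t u * (u ^ 2 / (2 * t ^ 2) - 1 / (2 * t))| ≤
      (Real.sqrt (2 * π * b))⁻¹ * Real.exp (-(u ^ 2) / (4 * b)) * ((u ^ 2 + 2 * b) / (2 * b ^ 2)) := by
  have ht : 0 < t := hb.trans_le hbt
  rw [abs_mul, abs_of_nonneg (heatKernel_nonneg t u)]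
  have hK : heatKernel t u ≤ (Real.sqrt (2 * π * b))⁻¹ * Real.exp (-(u ^ 2) / (4 * b)) := by
    unfold heatKernel
    apply mul_le_mul ?_ ?_ (Real.exp_pos _).le (by positivity)
    · apply inv_anti₀ (Real.sqrt_pos.2 (by positivity))
      apply Real.sqrt_le_sqrt
      nlinarith [Real.pi_pos]
    · apply Real.exp_le_exp.2
      rw [div_le_div_iff₀ (by positivity) (by positivity)]
      nlinarith [sq_nonneg u]
  have hX : |u ^ 2 / (2 * t ^ 2) - 1 / (2 * t)| ≤ (u ^ 2 + 2 * b) / (2 * b ^ 2) := by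
    have h1 : u ^ 2 / (2 * t ^ 2) ≤ u ^ 2 / (2 * b ^ 2) := by gcongr <;> nlinarith
    have h2 : 1 / (2 * t) ≤ 1 / (2 * b) := by gcongr
    have h3 : (0:ℝ) ≤ u ^ 2 / (2 * t ^ 2) := by positivity
    have h4 : (0:ℝ) ≤ 1 / (2 * t) := by positivity
    have h5 : u ^ 2 / (2 * b ^ 2) + 1 / (2 * b) ≤ (u ^ 2 + 2 * b) / (2 * b ^ 2) := by
      rw [div_add_div _ _ (by positivity) (by positivity), div_le_div_iff₀ (by positivity) (by positivity)]
      nlinarith [sq_nonneg u]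
    rw [abs_le]
    constructor <;> linarith
  calc heatKernel t u * |u ^ 2 / (2 * t ^ 2) - 1 / (2 * t)|
      ≤ ((Real.sqrt (2 * π * b))⁻¹ * Real.exp (-(u ^ 2) / (4 * b))) * ((u ^ 2 + 2 * b) / (2 * b ^ 2)) :=
        mul_le_mul hK hX (abs_nonneg _) (by positivity)
    _ = _ := by ring

lemma heatKernel_diff_le (u b a : ℝ) (hb : 0 < b) (hba : b ≤ a) (ha2 : a ≤ 2 * b) :
    |heatKernel a u - heatKernel b u| ≤
      (a - b) * ((Real.sqrt (2 * π * b))⁻¹ * Real.exp (-(u ^ 2) / (4 * b)) *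
        ((u ^ 2 + 2 * b) / (2 * b ^ 2))) := by
  set M := (Real.sqrt (2 * π * b))⁻¹ * Real.exp (-(u ^ 2) / (4 * b)) *
      ((u ^ 2 + 2 * b) / (2 * b ^ 2)) with hM
  have key := Convex.norm_image_sub_le_of_norm_hasDerivWithin_le
    (f := fun t => heatKernel t u)
    (f' := fun t => heatKernel t u * (u ^ 2 / (2 * t ^ 2) - 1 / (2 * t)))
    (s := Set.Icc b a) (C := M)
    (fun t htm => ((hasDerivAt_heatKernel u t (hb.trans_le htm.1)).hasDerivWithinAt))
    (fun t htm => by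
      rw [Real.norm_eq_abs]
      exact heatKernel_deriv_bound u b t hb htm.1 (htm.2.trans ha2))
    (convex_Icc b a) (Set.left_mem_Icc.2 hba) (Set.right_mem_Icc.2 hba)
  rw [Real.norm_eq_abs, Real.norm_eq_abs] at key
  have h2 : |a - b| = a - b := abs_of_nonneg (by linarith)
  rw [h2] at key
  linarith [key]

lemma Mb_sq_weight_le (β T b : ℝ) (hβ : 0 ≤ β) (hb : 0 < b) (hbT : b ≤ T) (u : ℝ) :
    ((Real.sqrt (2 * π * b))⁻¹ * Real.exp (-(u ^ 2) / (4 * b)) * ((u ^ 2 + 2 * b) / (2 * b ^ 2))) ^ 2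
        * Real.exp (2 * β * |u|)
      ≤ ((2 * π * b)⁻¹ * (130 * Real.exp (4 * β ^ 2 * T)) / b ^ 2) *
          Real.exp (-(1 / (8 * b) * u ^ 2)) := by
  have hs : ((Real.sqrt (2 * π * b))⁻¹) ^ 2 = (2 * π * b)⁻¹ := by
    rw [← Real.sqrt_inv, Real.sq_sqrt (by positivity)]
  have he : Real.exp (-(u ^ 2) / (4 * b)) ^ 2 = Real.exp (-(1 / (2 * b) * u ^ 2)) := by
    rw [pow_two, ← Real.exp_add]
    congr 1
    field_simp
    ring
  have hLHS : ((Real.sqrt (2 * π * b))⁻¹ * Real.exp (-(u ^ 2) / (4 * b)) *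
        ((u ^ 2 + 2 * b) / (2 * b ^ 2))) ^ 2 * Real.exp (2 * β * |u|) =
      (2 * π * b)⁻¹ / (4 * b ^ 4) * ((u ^ 2 + 2 * b) ^ 2 *
        (Real.exp (2 * β * |u|) * Real.exp (-(1 / (2 * b) * u ^ 2)))) := by
    rw [mul_pow, mul_pow, hs, he]
    field_simp
    ring
  rw [hLHS]
  -- exp weight absorption
  have hexp1 : Real.exp (2 * β * |u|) * Real.exp (-(1 / (2 * b) * u ^ 2)) ≤
      Real.exp (4 * β ^ 2 * b) * Real.exp (-(1 / (4 * b) * u ^ 2)) := by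
    have h := exp_weight_bound β (1 / (2 * b)) u hβ (by positivity)
    have e1 : 2 * β ^ 2 / (1 / (2 * b)) = 4 * β ^ 2 * b := by field_simp; ring
    have e2 : 1 / (2 * b) / 2 = 1 / (4 * b) := by ring
    rwa [e1, e2] at h
  -- polynomial bound
  have h3 : 1 / (8 * b) * (8 * b) = 1 := by field_simp
  have h1 := sq_le_four_exp (x := 1 / (8 * b) * u ^ 2) (by positivity)
  have h2 : (1:ℝ) ≤ Real.exp (1 / (8 * b) * u ^ 2) := Real.one_le_exp (by positivity)
  have h4 : (u ^ 2) ^ 2 ≤ 256 * b ^ 2 * Real.exp (1 / (8 * b) * u ^ 2) := by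
    have hm := mul_le_mul_of_nonneg_left h1 (show (0:ℝ) ≤ 64 * b ^ 2 by positivity)
    calc (u ^ 2) ^ 2 = 64 * b ^ 2 * ((1 / (8 * b) * u ^ 2) ^ 2) := by
          field_simp; ring
      _ ≤ 64 * b ^ 2 * (4 * Real.exp (1 / (8 * b) * u ^ 2)) := hm
      _ = 256 * b ^ 2 * Real.exp (1 / (8 * b) * u ^ 2) := by ring
  have hpoly : (u ^ 2 + 2 * b) ^ 2 ≤ 520 * b ^ 2 * Real.exp (1 / (8 * b) * u ^ 2) := by
    nlinarith [h4, h2, sq_nonneg (u ^ 2 - 2 * b), sq_nonneg u, hb]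
  -- exp splitting
  have hsplit : Real.exp (-(1 / (4 * b) * u ^ 2)) =
      Real.exp (-(1 / (8 * b) * u ^ 2)) * Real.exp (-(1 / (8 * b) * u ^ 2)) := by
    rw [← Real.exp_add]
    congr 1
    field_simp
    ring
  have hcancel : Real.exp (1 / (8 * b) * u ^ 2) * Real.exp (-(1 / (8 * b) * u ^ 2)) = 1 := by
    rw [← Real.exp_add]
    simp
  have hbT' : Real.exp (4 * β ^ 2 * b) ≤ Real.exp (4 * β ^ 2 * T) :=
    Real.exp_le_exp.2 (by nlinarith)
  set E8 := Real.exp (-(1 / (8 * b) * u ^ 2)) with hE8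
  have hE8pos : 0 < E8 := Real.exp_pos _
  calc (2 * π * b)⁻¹ / (4 * b ^ 4) * ((u ^ 2 + 2 * b) ^ 2 *
        (Real.exp (2 * β * |u|) * Real.exp (-(1 / (2 * b) * u ^ 2))))
      ≤ (2 * π * b)⁻¹ / (4 * b ^ 4) * ((u ^ 2 + 2 * b) ^ 2 *
        (Real.exp (4 * β ^ 2 * b) * Real.exp (-(1 / (4 * b) * u ^ 2)))) := by
        apply mul_le_mul_of_nonneg_left _ (by positivity)
        exact mul_le_mul_of_nonneg_left hexp1 (by positivity)
    _ = (2 * π * b)⁻¹ / (4 * b ^ 4) * Real.exp (4 * β ^ 2 * b) *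
        (((u ^ 2 + 2 * b) ^ 2 * E8) * E8) := by
        rw [hsplit]; ring
    _ ≤ (2 * π * b)⁻¹ / (4 * b ^ 4) * Real.exp (4 * β ^ 2 * b) *
        ((520 * b ^ 2 * Real.exp (1 / (8 * b) * u ^ 2) * E8) * E8) := by
        apply mul_le_mul_of_nonneg_left _ (by positivity)
        apply mul_le_mul_of_nonneg_right _ hE8pos.le
        exact mul_le_mul_of_nonneg_right hpoly hE8pos.le
    _ = (2 * π * b)⁻¹ / (4 * b ^ 4) * Real.exp (4 * β ^ 2 * b) * (520 * b ^ 2) * E8 := by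
        rw [show 520 * b ^ 2 * Real.exp (1 / (8 * b) * u ^ 2) * E8 * E8
            = 520 * b ^ 2 * (Real.exp (1 / (8 * b) * u ^ 2) * E8) * E8 from by ring, hcancel]
        ring
    _ ≤ ((2 * π * b)⁻¹ * (130 * Real.exp (4 * β ^ 2 * T)) / b ^ 2) * E8 := by
        apply mul_le_mul_of_nonneg_right _ hE8pos.le
        have : (2 * π * b)⁻¹ / (4 * b ^ 4) * Real.exp (4 * β ^ 2 * b) * (520 * b ^ 2)
            = (2 * π * b)⁻¹ * (130 * Real.exp (4 * β ^ 2 * b)) / b ^ 2 := by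
          field_simp
          ring
        rw [this]
        gcongr

lemma Mb_continuous (β b : ℝ) (hb : 0 < b) :
    Continuous (fun u : ℝ =>
      ((Real.sqrt (2 * π * b))⁻¹ * Real.exp (-(u ^ 2) / (4 * b)) *
        ((u ^ 2 + 2 * b) / (2 * b ^ 2))) ^ 2 * Real.exp (2 * β * |u|)) := by
  fun_prop

lemma Mb_sq_weight_integrable (β b : ℝ) (hβ : 0 ≤ β) (hb : 0 < b) :
    Integrable (fun u : ℝ =>
      ((Real.sqrt (2 * π * b))⁻¹ * Real.exp (-(u ^ 2) / (4 * b)) *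
        ((u ^ 2 + 2 * b) / (2 * b ^ 2))) ^ 2 * Real.exp (2 * β * |u|)) :=
  gauss_integrable (Mb_continuous β b hb).aestronglyMeasurable
    (c := 1 / (8 * b)) (A := (2 * π * b)⁻¹ * (130 * Real.exp (4 * β ^ 2 * b)) / b ^ 2)
    (by positivity) (fun x => by positivity)
    (fun x => Mb_sq_weight_le β b b hβ hb le_rfl x)

lemma Mb_sq_weight_integral_le (β T b : ℝ) (hβ : 0 ≤ β) (hb : 0 < b) (hbT : b ≤ T) :
    ∫ u, ((Real.sqrt (2 * π * b))⁻¹ * Real.exp (-(u ^ 2) / (4 * b)) *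
        ((u ^ 2 + 2 * b) / (2 * b ^ 2))) ^ 2 * Real.exp (2 * β * |u|) ≤
      (130 * Real.sqrt (8 * π) / (2 * π) * Real.exp (4 * β ^ 2 * T)) * b ^ (-(5/2) : ℝ) := by
  have h := gauss_integral_le (Mb_continuous β b hb).aestronglyMeasurable
    (c := 1 / (8 * b)) (A := (2 * π * b)⁻¹ * (130 * Real.exp (4 * β ^ 2 * T)) / b ^ 2)
    (by positivity) (fun x => by positivity)
    (fun x => Mb_sq_weight_le β T b hβ hb hbT x)
  refine h.trans (le_of_eq ?_)
  have e1 : π / (1 / (8 * b)) = 8 * π * b := by field_simp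
  rw [e1]
  have e2 : Real.sqrt (8 * π * b) = Real.sqrt (8 * π) * Real.sqrt b := by
    rw [Real.sqrt_mul (by positivity)]
  have e3 : b ^ (-(5/2) : ℝ) = Real.sqrt b / b ^ 3 := by
    rw [Real.sqrt_eq_rpow, ← Real.rpow_natCast b 3, ← Real.rpow_sub hb]
    norm_num
  rw [e2, e3]
  field_simp

noncomputable def C3 (β T : ℝ) : ℝ :=
  4 * (Real.exp (2 * β ^ 2 * T) / Real.sqrt (2 * π)) +
    130 * Real.sqrt (8 * π) / (2 * π) * Real.exp (4 * β ^ 2 * T)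

lemma C3_nonneg (β T : ℝ) : 0 ≤ C3 β T := by unfold C3; positivity

lemma diff_sq_weight_integrable (β a b : ℝ) (hβ : 0 ≤ β) (hb : 0 < b) (hba : b ≤ a) :
    Integrable (fun u => (heatKernel a u - heatKernel b u) ^ 2 * Real.exp (2 * β * |u|)) := by
  have ha : 0 < a := hb.trans_le hba
  have hia := heatKernel_sq_weight_integrable β a hβ ha
  have hib := heatKernel_sq_weight_integrable β b hβ hb
  have hg := (hia.const_mul 2).add (hib.const_mul 2)
  refine hg.mono' ?_ ?_
  · exact ((((heatKernel_continuous a ha).sub (heatKernel_continuous b hb)).pow 2).mul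
      (Real.continuous_exp.comp (continuous_const.mul continuous_abs))).aestronglyMeasurable
  · filter_upwards with u
    simp only [Pi.add_apply]
    rw [Real.norm_eq_abs, abs_of_nonneg (by positivity)]
    nlinarith [Real.exp_pos (2 * β * |u|), sq_nonneg (heatKernel a u + heatKernel b u),
      sq_nonneg (heatKernel a u - heatKernel b u)]

lemma inner_integral_le (β T α a b : ℝ) (hβ : 0 ≤ β) (hα₀ : 0 < α) (hα2 : α ≤ 2)
    (hb : 0 < b) (hba : b ≤ a) (haT : a ≤ T) :
    ∫ u, (heatKernel a u - heatKernel b u) ^ 2 * Real.exp (2 * β * |u|) ≤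
      C3 β T * (a - b) ^ α * b ^ (-(1/2 + α)) := by
  have ha : 0 < a := hb.trans_le hba
  have hbT : b ≤ T := hba.trans haT
  by_cases hab : a = b
  · subst hab
    simp [Real.zero_rpow hα₀.ne']
  have hδ : 0 < a - b := sub_pos.2 (lt_of_le_of_ne hba (Ne.symm hab))
  rcases le_or_gt b (a - b) with hcase | hcase
  · -- crude bound: b ≤ δ
    have hia := heatKernel_sq_weight_integrable β a hβ ha
    have hib := heatKernel_sq_weight_integrable β b hβ hb
    have hIa := heatKernel_sq_weight_integral_le β T a hβ ha haT
    have hIb := heatKernel_sq_weight_integral_le β T b hβ hb hbT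
    have hmono : ∫ u, (heatKernel a u - heatKernel b u) ^ 2 * Real.exp (2 * β * |u|) ≤
        ∫ u, (2 * (heatKernel a u ^ 2 * Real.exp (2 * β * |u|)) +
              2 * (heatKernel b u ^ 2 * Real.exp (2 * β * |u|))) := by
      refine integral_mono (diff_sq_weight_integrable β a b hβ hb hba)
        ((hia.const_mul 2).add (hib.const_mul 2)) (fun u => ?_)
      nlinarith [Real.exp_pos (2 * β * |u|), sq_nonneg (heatKernel a u + heatKernel b u)]
    rw [integral_add (hia.const_mul 2) (hib.const_mul 2),
      integral_const_mul, integral_const_mul] at hmono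
    set CA := Real.exp (2 * β ^ 2 * T) / Real.sqrt (2 * π) with hCA
    have hCApos : 0 ≤ CA := by rw [hCA]; positivity
    have hstep : (2:ℝ) * (CA * a ^ (-(1/2):ℝ)) + 2 * (CA * b ^ (-(1/2):ℝ)) ≤
        4 * CA * b ^ (-(1/2):ℝ) := by
      have h1 : a ^ (-(1/2):ℝ) ≤ b ^ (-(1/2):ℝ) :=
        Real.rpow_le_rpow_of_nonpos hb hba (by norm_num)
      nlinarith [Real.rpow_nonneg hb.le (-(1/2):ℝ)]
    have hsplit : b ^ (-(1/2):ℝ) = b ^ α * b ^ (-(1/2 + α)) := by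
      rw [← Real.rpow_add hb]
      congr 1
      ring
    have hfinal : 4 * CA * b ^ (-(1/2):ℝ) ≤ C3 β T * (a - b) ^ α * b ^ (-(1/2 + α)) := by
      rw [hsplit]
      have h2 : b ^ α ≤ (a - b) ^ α := Real.rpow_le_rpow hb.le hcase hα₀.le
      have h3 : (4:ℝ) * CA ≤ C3 β T := by
        rw [hCA]; unfold C3
        have hX : (0:ℝ) ≤ 130 * Real.sqrt (8 * π) / (2 * π) * Real.exp (4 * β ^ 2 * T) := by
          positivity
        linarith
      calc 4 * CA * (b ^ α * b ^ (-(1/2 + α)))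
          ≤ 4 * CA * ((a - b) ^ α * b ^ (-(1/2 + α))) := by
            apply mul_le_mul_of_nonneg_left _ (by positivity)
            exact mul_le_mul_of_nonneg_right h2 (Real.rpow_nonneg hb.le _)
        _ ≤ C3 β T * ((a - b) ^ α * b ^ (-(1/2 + α))) := by
            apply mul_le_mul_of_nonneg_right h3 (by positivity)
        _ = C3 β T * (a - b) ^ α * b ^ (-(1/2 + α)) := by ring
    calc ∫ u, (heatKernel a u - heatKernel b u) ^ 2 * Real.exp (2 * β * |u|)
        ≤ (2 * ∫ u, heatKernel a u ^ 2 * Real.exp (2 * β * |u|)) +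
          2 * ∫ u, heatKernel b u ^ 2 * Real.exp (2 * β * |u|) := hmono
      _ ≤ 2 * (CA * a ^ (-(1/2):ℝ)) + 2 * (CA * b ^ (-(1/2):ℝ)) := by
          linarith [hIa, hIb]
      _ ≤ 4 * CA * b ^ (-(1/2):ℝ) := hstep
      _ ≤ _ := hfinal
  · -- fine bound: δ < b, use MVT
    have ha2 : a ≤ 2 * b := by linarith
    have hMint := Mb_sq_weight_integrable β b hβ hb
    have hMle := Mb_sq_weight_integral_le β T b hβ hb hbT
    set Mb : ℝ → ℝ := fun u => (Real.sqrt (2 * π * b))⁻¹ * Real.exp (-(u ^ 2) / (4 * b)) *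
        ((u ^ 2 + 2 * b) / (2 * b ^ 2)) with hMb
    have hmono : ∫ u, (heatKernel a u - heatKernel b u) ^ 2 * Real.exp (2 * β * |u|) ≤
        ∫ u, (a - b) ^ 2 * (Mb u ^ 2 * Real.exp (2 * β * |u|)) := by
      refine integral_mono (diff_sq_weight_integrable β a b hβ hb hba)
        (hMint.const_mul ((a - b) ^ 2)) (fun u => ?_)
      have hd := heatKernel_diff_le u b a hb hba ha2
      have hsq : (heatKernel a u - heatKernel b u) ^ 2 ≤ ((a - b) * Mb u) ^ 2 := by
        rw [← sq_abs (heatKernel a u - heatKernel b u)]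
        have habs : |(a - b) * Mb u| = (a - b) * Mb u := abs_of_nonneg (by positivity)
        apply pow_le_pow_left₀ (abs_nonneg _) _ 2
        rw [hMb]
        exact hd
      calc (heatKernel a u - heatKernel b u) ^ 2 * Real.exp (2 * β * |u|)
          ≤ ((a - b) * Mb u) ^ 2 * Real.exp (2 * β * |u|) :=
            mul_le_mul_of_nonneg_right hsq (Real.exp_pos _).le
        _ = (a - b) ^ 2 * (Mb u ^ 2 * Real.exp (2 * β * |u|)) := by ring
    rw [integral_const_mul] at hmono
    set CB := 130 * Real.sqrt (8 * π) / (2 * π) * Real.exp (4 * β ^ 2 * T) with hCB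
    have hCBpos : 0 ≤ CB := by rw [hCB]; positivity
    have hchain : (a - b) ^ 2 * (CB * b ^ (-(5/2):ℝ)) ≤
        C3 β T * (a - b) ^ α * b ^ (-(1/2 + α)) := by
      have e1 : ((a - b):ℝ) ^ 2 = (a - b) ^ ((2:ℝ)) := by
        rw [show ((2:ℝ)) = ((2:ℕ):ℝ) by norm_num, Real.rpow_natCast]
      have e2 : (a - b) ^ ((2:ℝ)) = (a - b) ^ α * (a - b) ^ ((2:ℝ) - α) := by
        rw [← Real.rpow_add hδ]; congr 1; ring
      have h2 : (a - b) ^ ((2:ℝ) - α) ≤ b ^ ((2:ℝ) - α) :=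
        Real.rpow_le_rpow hδ.le hcase.le (by linarith)
      have e3 : b ^ ((2:ℝ) - α) * b ^ (-(5/2):ℝ) = b ^ (-(1/2 + α)) := by
        rw [← Real.rpow_add hb]; congr 1; ring
      have hCB3 : CB ≤ C3 β T := by
        rw [hCB]; unfold C3
        have hX : (0:ℝ) ≤ 4 * (Real.exp (2 * β ^ 2 * T) / Real.sqrt (2 * π)) := by positivity
        linarith
      calc (a - b) ^ 2 * (CB * b ^ (-(5/2):ℝ))
          = CB * ((a - b) ^ α * ((a - b) ^ ((2:ℝ) - α) * b ^ (-(5/2):ℝ))) := by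
            rw [e1, e2]; ring
        _ ≤ CB * ((a - b) ^ α * (b ^ ((2:ℝ) - α) * b ^ (-(5/2):ℝ))) := by
            apply mul_le_mul_of_nonneg_left _ hCBpos
            apply mul_le_mul_of_nonneg_left _ (Real.rpow_nonneg hδ.le _)
            exact mul_le_mul_of_nonneg_right h2 (Real.rpow_nonneg hb.le _)
        _ = CB * ((a - b) ^ α * b ^ (-(1/2 + α))) := by rw [e3]
        _ ≤ C3 β T * ((a - b) ^ α * b ^ (-(1/2 + α))) := by
            apply mul_le_mul_of_nonneg_right hCB3 (by positivity)
        _ = C3 β T * (a - b) ^ α * b ^ (-(1/2 + α)) := by ring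
    calc ∫ u, (heatKernel a u - heatKernel b u) ^ 2 * Real.exp (2 * β * |u|)
        ≤ (a - b) ^ 2 * ∫ u, Mb u ^ 2 * Real.exp (2 * β * |u|) := hmono
      _ ≤ (a - b) ^ 2 * (CB * b ^ (-(5/2):ℝ)) := by
          apply mul_le_mul_of_nonneg_left _ (sq_nonneg _)
          exact hMle
      _ ≤ _ := hchain

lemma F_le (β T α a b y : ℝ) (hβ : 0 ≤ β) (hα₀ : 0 < α) (hα2 : α ≤ 2)
    (hb : 0 < b) (hba : b ≤ a) (haT : a ≤ T) :
    ∫ x, |heatKernel a (y - x) - heatKernel b (y - x)| ^ 2 * Real.exp (2 * β * |x|) ≤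
      Real.exp (2 * β * |y|) * (C3 β T * (a - b) ^ α * b ^ (-(1/2 + α))) := by
  set h : ℝ → ℝ := fun u => (heatKernel a u - heatKernel b u) ^ 2 * Real.exp (2 * β * |u|)
    with hh
  have hhint : Integrable h := diff_sq_weight_integrable β a b hβ hb hba
  have hgint : Integrable (fun x => Real.exp (2 * β * |y|) * h (y - x)) :=
    (hhint.comp_sub_left y).const_mul _
  have hptwise : ∀ x, |heatKernel a (y - x) - heatKernel b (y - x)| ^ 2 *
      Real.exp (2 * β * |x|) ≤ Real.exp (2 * β * |y|) * h (y - x) := by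
    intro x
    rw [hh]
    simp only [sq_abs]
    have habs : |x| ≤ |y| + |y - x| := by
      calc |x| = |y - (y - x)| := by congr 1; ring
        _ ≤ |y| + |y - x| := abs_sub y (y - x)
    have hexp : Real.exp (2 * β * |x|) ≤ Real.exp (2 * β * |y|) * Real.exp (2 * β * |y - x|) := by
      rw [← Real.exp_add]
      apply Real.exp_le_exp.2
      nlinarith [mul_le_mul_of_nonneg_left habs (by linarith : (0:ℝ) ≤ 2 * β)]
    calc (heatKernel a (y - x) - heatKernel b (y - x)) ^ 2 * Real.exp (2 * β * |x|)
        ≤ (heatKernel a (y - x) - heatKernel b (y - x)) ^ 2 *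
          (Real.exp (2 * β * |y|) * Real.exp (2 * β * |y - x|)) :=
          mul_le_mul_of_nonneg_left hexp (sq_nonneg _)
      _ = Real.exp (2 * β * |y|) * ((heatKernel a (y - x) - heatKernel b (y - x)) ^ 2 *
          Real.exp (2 * β * |y - x|)) := by ring
  have step1 : ∫ x, |heatKernel a (y - x) - heatKernel b (y - x)| ^ 2 *
      Real.exp (2 * β * |x|) ≤ ∫ x, Real.exp (2 * β * |y|) * h (y - x) := by
    apply integral_mono_of_nonneg _ hgint (Filter.Eventually.of_forall hptwise)
    filter_upwards with x
    positivity
  have step2 : ∫ x, Real.exp (2 * β * |y|) * h (y - x) =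
      Real.exp (2 * β * |y|) * ∫ u, h u := by
    rw [integral_const_mul, integral_sub_left_eq_self h volume y]
  have step3 : ∫ u, h u ≤ C3 β T * (a - b) ^ α * b ^ (-(1/2 + α)) :=
    inner_integral_le β T α a b hβ hα₀ hα2 hb hba haT
  calc ∫ x, |heatKernel a (y - x) - heatKernel b (y - x)| ^ 2 * Real.exp (2 * β * |x|)
      ≤ ∫ x, Real.exp (2 * β * |y|) * h (y - x) := step1
    _ = Real.exp (2 * β * |y|) * ∫ u, h u := step2
    _ ≤ Real.exp (2 * β * |y|) * (C3 β T * (a - b) ^ α * b ^ (-(1/2 + α))) :=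
        mul_le_mul_of_nonneg_left step3 (Real.exp_pos _).le

lemma F_aestronglyMeasurable (β t₁ t₂ y : ℝ) :
    AEStronglyMeasurable (fun s => ∫ x : ℝ,
      |heatKernel (t₁ - s) (y - x) - heatKernel (t₂ - s) (y - x)| ^ 2 *
        Real.exp (2 * β * |x|)) volume := by
  have hf : StronglyMeasurable (fun p : ℝ × ℝ =>
      |heatKernel (t₁ - p.1) (y - p.2) - heatKernel (t₂ - p.1) (y - p.2)| ^ 2 *
        Real.exp (2 * β * |p.2|)) := by
    apply Measurable.stronglyMeasurable
    unfold heatKernel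
    fun_prop
  exact (hf.integral_prod_right').aestronglyMeasurable

/-- For every `β₁ > 0`, `T > 0` and `α ∈ (0, 1/2)` there is a constant `K = K(β₁, T, α)` such
that for all `0 < t₂ ≤ t₁ ≤ T` and all `y ∈ ℝ`,
`∫_0^{t₂} ∫_ℝ |p_{t₁-s}(y-x) - p_{t₂-s}(y-x)|² e^{2β₁|x|} dx ds ≤ K e^{2β₁|y|} (t₁ - t₂)^α`. -/
theorem heatKernel_diff_sq_time_integral_le (β₁ T α : ℝ) (hβ₁ : 0 < β₁) (hT : 0 < T)
    (hα₀ : 0 < α) (hα : α < 1 / 2) :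
    ∃ K : ℝ, ∀ t₂ t₁ y : ℝ, 0 < t₂ → t₂ ≤ t₁ → t₁ ≤ T →
      (∫ s in (0:ℝ)..t₂, ∫ x : ℝ,
          |heatKernel (t₁ - s) (y - x) - heatKernel (t₂ - s) (y - x)| ^ 2 *
            Real.exp (2 * β₁ * |x|)) ≤
        K * Real.exp (2 * β₁ * |y|) * (t₁ - t₂) ^ α := by
  refine ⟨C3 β₁ T * T ^ ((1:ℝ)/2 - α) / (1/2 - α), fun t₂ t₁ y ht₂ h21 h1T => ?_⟩
  have hβ : 0 ≤ β₁ := hβ₁.le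
  have hα2 : α ≤ 2 := by linarith
  set F : ℝ → ℝ := fun s => ∫ x : ℝ,
      |heatKernel (t₁ - s) (y - x) - heatKernel (t₂ - s) (y - x)| ^ 2 *
        Real.exp (2 * β₁ * |x|) with hF
  set δ := t₁ - t₂ with hδdef
  have hδ0 : 0 ≤ δ := by rw [hδdef]; linarith
  set E := Real.exp (2 * β₁ * |y|) with hE
  have hE0 : 0 < E := Real.exp_pos _
  set r : ℝ := -(1/2 + α) with hr
  have hr1 : (-1:ℝ) < r := by rw [hr]; linarith
  set G : ℝ → ℝ := fun s => (E * (C3 β₁ T * δ ^ α)) * (t₂ - s) ^ r with hG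
  have hFle : ∀ s ∈ Set.Ico (0:ℝ) t₂, F s ≤ G s := by
    intro s hs
    have hb : 0 < t₂ - s := sub_pos.2 hs.2
    have hba : t₂ - s ≤ t₁ - s := by linarith
    have haT : t₁ - s ≤ T := by have := hs.1; linarith
    have h := F_le β₁ T α (t₁ - s) (t₂ - s) y hβ hα₀ hα2 hb hba haT
    have e : (t₁ - s) - (t₂ - s) = δ := by rw [hδdef]; ring
    rw [e] at h
    calc F s ≤ E * (C3 β₁ T * δ ^ α * (t₂ - s) ^ (-(1/2 + α))) := h
      _ = G s := by rw [hG, hr]; ring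
  have hF0 : ∀ s, 0 ≤ F s := fun s => integral_nonneg (fun x => by positivity)
  have hGint : IntervalIntegrable G volume 0 t₂ := by
    have h1 : IntervalIntegrable (fun x : ℝ => x ^ r) volume 0 t₂ :=
      intervalIntegral.intervalIntegrable_rpow' hr1
    have h2 := h1.comp_sub_left t₂
    simp only [sub_self, sub_zero] at h2
    exact (h2.const_mul _).symm
  have hFint : IntervalIntegrable F volume 0 t₂ := by
    rw [intervalIntegrable_iff_integrableOn_Ioc_of_le ht₂.le]
    have hGon : IntegrableOn G (Set.Ioc 0 t₂) volume :=
      (intervalIntegrable_iff_integrableOn_Ioc_of_le ht₂.le).1 hGint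
    refine Integrable.mono' hGon ((F_aestronglyMeasurable β₁ t₁ t₂ y).restrict) ?_
    have hres : volume.restrict (Set.Ioc (0:ℝ) t₂) = volume.restrict (Set.Ioo 0 t₂) :=
      (Measure.restrict_congr_set Ioo_ae_eq_Ioc).symm
    rw [IntegrableOn] at *
    rw [hres]
    filter_upwards [ae_restrict_mem measurableSet_Ioo] with s hs
    rw [Real.norm_eq_abs, abs_of_nonneg (hF0 s)]
    exact hFle s ⟨hs.1.le, hs.2⟩
  have h0 : ∀ᵐ s : ℝ, s ≠ t₂ := by
    have hsing : volume ({t₂} : Set ℝ) = 0 := measure_singleton t₂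
    rw [ae_iff]
    convert hsing using 2
    ext s
    simp
  have hcomp : (∫ s in (0:ℝ)..t₂, F s) ≤ ∫ s in (0:ℝ)..t₂, G s := by
    apply intervalIntegral.integral_mono_ae_restrict ht₂.le hFint hGint
    filter_upwards [ae_restrict_mem measurableSet_Icc, ae_restrict_of_ae h0] with s hs hne
    exact hFle s ⟨hs.1, lt_of_le_of_ne hs.2 hne⟩
  have hGval : (∫ s in (0:ℝ)..t₂, G s) =
      (E * (C3 β₁ T * δ ^ α)) * (t₂ ^ (r+1) / (r+1)) := by
    rw [hG]
    rw [intervalIntegral.integral_const_mul]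
    congr 1
    rw [intervalIntegral.integral_comp_sub_left (fun x => x ^ r) t₂]
    simp only [sub_self, sub_zero]
    rw [integral_rpow (Or.inl hr1)]
    rw [Real.zero_rpow (by rw [hr]; linarith : r + 1 ≠ 0)]
    ring
  have hrp1 : 0 < r + 1 := by rw [hr]; linarith
  have hle2 : t₂ ^ (r+1) ≤ T ^ (r+1) := Real.rpow_le_rpow ht₂.le (le_trans h21 h1T) hrp1.le
  have hC3 := C3_nonneg β₁ T
  calc (∫ s in (0:ℝ)..t₂, F s) ≤ ∫ s in (0:ℝ)..t₂, G s := hcomp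
    _ = (E * (C3 β₁ T * δ ^ α)) * (t₂ ^ (r+1) / (r+1)) := hGval
    _ ≤ (E * (C3 β₁ T * δ ^ α)) * (T ^ (r+1) / (r+1)) := by
        have hnum : t₂ ^ (r+1) / (r+1) ≤ T ^ (r+1) / (r+1) := by
          gcongr
        exact mul_le_mul_of_nonneg_left hnum (by positivity)
    _ = C3 β₁ T * T ^ ((1:ℝ)/2 - α) / (1/2 - α) * E * δ ^ α := by
        have e1 : r + 1 = (1:ℝ)/2 - α := by rw [hr]; ring
        rw [e1]
        ring
end

section
/- For every β₁ > 0 and T > 0 there exists a constant K = K(β₁, T) such that for all t ∈ (0, T] and all r ∈ ℝ, ∫_ℝ (p_t(r+x) − p_t(r−x))² e^{3β₁|x|} dx ≤ K (1 + e^{3β₁|r|}) / √t. -/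
open MeasureTheory Real

/-- Core exponent inequality. -/
lemma hk_exp_core {β t T : ℝ} (hβ : 0 < β) (ht : 0 < t) (htT : t ≤ T)
    (y c : ℝ) (hc : 0 ≤ c) (x : ℝ) (hx : |x| ≤ |y| + c) :
    Real.exp (-(y ^ 2) / (2 * t)) ^ 2 * Real.exp (3 * β * |x|) ≤
      Real.exp (3 * β * c) * Real.exp (9 * β ^ 2 * T / 2) *
        Real.exp (-(y ^ 2) / (2 * t)) := by
  have h2t : (0:ℝ) < 2 * t := by linarith
  rw [sq (Real.exp _), ← Real.exp_add, ← Real.exp_add, ← Real.exp_add, ← Real.exp_add]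
  apply Real.exp_le_exp.mpr
  have hkey : 3 * β * |y| * (2 * t) ≤ y ^ 2 + 9 * β ^ 2 * t ^ 2 := by
    nlinarith [sq_nonneg (|y| - 3 * β * t), sq_abs y]
  have h1 : 3 * β * |y| ≤ (y ^ 2 + 9 * β ^ 2 * t ^ 2) / (2 * t) :=
    (le_div_iff₀ h2t).mpr hkey
  have h2 : (y ^ 2 + 9 * β ^ 2 * t ^ 2) / (2 * t) = y ^ 2 / (2 * t) + 9 * β ^ 2 * t / 2 := by
    field_simp
  have h3 : 9 * β ^ 2 * t / 2 ≤ 9 * β ^ 2 * T / 2 := by nlinarith [sq_nonneg β]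
  have h4 : 3 * β * |x| ≤ 3 * β * |y| + 3 * β * c := by nlinarith
  have h5 : -(y ^ 2) / (2 * t) = -(y ^ 2 / (2 * t)) := by ring
  rw [h5]
  rw [h2] at h1
  linarith

/-- Main theorem. -/
theorem heatKernel_antisym_sq_integral_le (β₁ T : ℝ) (hβ₁ : 0 < β₁) (hT : 0 < T) :
    ∃ K : ℝ, ∀ t r : ℝ, 0 < t → t ≤ T →
      (∫ x : ℝ, (heatKernel t (r + x) - heatKernel t (r - x)) ^ 2 * Real.exp (3 * β₁ * |x|)) ≤
        K * (1 + Real.exp (3 * β₁ * |r|)) / Real.sqrt t := by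
  set C := Real.exp (9 * β₁ ^ 2 * T / 2) with hC
  have hCpos : 0 < C := Real.exp_pos _
  refine ⟨4 * C, fun t r ht htT => ?_⟩
  have h2t : (0:ℝ) < 2 * t := by linarith
  have hπt : (0:ℝ) < 2 * Real.pi * t := by positivity
  have hsπt : (0:ℝ) < Real.sqrt (2 * Real.pi * t) := Real.sqrt_pos.mpr hπt
  set D := 2 * (2 * Real.pi * t)⁻¹ * (Real.exp (3 * β₁ * |r|) * C) with hD
  have hDpos : 0 < D := by positivity
  set g : ℝ → ℝ := fun x =>
    D * (Real.exp (-((r + x) ^ 2) / (2 * t)) + Real.exp (-((r - x) ^ 2) / (2 * t))) with hg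
  -- integrability of g
  have base : Integrable (fun x : ℝ => Real.exp (-(2 * t)⁻¹ * x ^ 2)) :=
    integrable_exp_neg_mul_sq (by positivity)
  have hform : ∀ y : ℝ, Real.exp (-(y ^ 2) / (2 * t)) = Real.exp (-(2 * t)⁻¹ * y ^ 2) := by
    intro y; congr 1; field_simp
  have int1 : Integrable (fun x : ℝ => Real.exp (-((r + x) ^ 2) / (2 * t))) := by
    have := base.comp_add_right r
    refine this.congr ?_
    filter_upwards with x
    rw [hform, add_comm]
  have int2 : Integrable (fun x : ℝ => Real.exp (-((r - x) ^ 2) / (2 * t))) := by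
    have := base.comp_sub_right r
    refine this.congr ?_
    filter_upwards with x
    rw [hform]
    congr 2
    ring
  have hg_int : Integrable g := ((int1.add int2).const_mul D)
  -- pointwise bound
  have hbound : ∀ x : ℝ,
      (heatKernel t (r + x) - heatKernel t (r - x)) ^ 2 * Real.exp (3 * β₁ * |x|) ≤ g x := by
    intro x
    have hss : ((Real.sqrt (2 * Real.pi * t))⁻¹) ^ 2 = (2 * Real.pi * t)⁻¹ := by
      rw [inv_pow, Real.sq_sqrt hπt.le]
    have hsq : (heatKernel t (r + x) - heatKernel t (r - x)) ^ 2 ≤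
        2 * (2 * Real.pi * t)⁻¹ *
          (Real.exp (-((r + x) ^ 2) / (2 * t)) ^ 2 + Real.exp (-((r - x) ^ 2) / (2 * t)) ^ 2) := by
      have e1 : heatKernel t (r + x) =
          (Real.sqrt (2 * Real.pi * t))⁻¹ * Real.exp (-((r + x) ^ 2) / (2 * t)) := rfl
      have e2 : heatKernel t (r - x) =
          (Real.sqrt (2 * Real.pi * t))⁻¹ * Real.exp (-((r - x) ^ 2) / (2 * t)) := rfl
      rw [e1, e2, ← hss]
      nlinarith [sq_nonneg ((Real.sqrt (2 * Real.pi * t))⁻¹ *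
        (Real.exp (-((r + x) ^ 2) / (2 * t)) + Real.exp (-((r - x) ^ 2) / (2 * t))))]
    have hE : 0 < Real.exp (3 * β₁ * |x|) := Real.exp_pos _
    have hc1 : Real.exp (-((r + x) ^ 2) / (2 * t)) ^ 2 * Real.exp (3 * β₁ * |x|) ≤
        Real.exp (3 * β₁ * |r|) * C * Real.exp (-((r + x) ^ 2) / (2 * t)) := by
      refine hk_exp_core hβ₁ ht htT (r + x) (|r|) (abs_nonneg r) x ?_
      calc |x| = |(r + x) - r| := by congr 1; ring
        _ ≤ |r + x| + |r| := abs_sub _ _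
    have hc2 : Real.exp (-((r - x) ^ 2) / (2 * t)) ^ 2 * Real.exp (3 * β₁ * |x|) ≤
        Real.exp (3 * β₁ * |r|) * C * Real.exp (-((r - x) ^ 2) / (2 * t)) := by
      refine hk_exp_core hβ₁ ht htT (r - x) (|r|) (abs_nonneg r) x ?_
      calc |x| = |r - (r - x)| := by congr 1; ring
        _ ≤ |r| + |r - x| := abs_sub _ _
        _ = |r - x| + |r| := add_comm _ _
    have hinv : (0:ℝ) ≤ (2 * Real.pi * t)⁻¹ := by positivity
    calc (heatKernel t (r + x) - heatKernel t (r - x)) ^ 2 * Real.exp (3 * β₁ * |x|)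
        ≤ 2 * (2 * Real.pi * t)⁻¹ *
          (Real.exp (-((r + x) ^ 2) / (2 * t)) ^ 2 + Real.exp (-((r - x) ^ 2) / (2 * t)) ^ 2) *
            Real.exp (3 * β₁ * |x|) := by
          exact mul_le_mul_of_nonneg_right hsq hE.le
      _ = 2 * (2 * Real.pi * t)⁻¹ *
          (Real.exp (-((r + x) ^ 2) / (2 * t)) ^ 2 * Real.exp (3 * β₁ * |x|) +
           Real.exp (-((r - x) ^ 2) / (2 * t)) ^ 2 * Real.exp (3 * β₁ * |x|)) := by ring
      _ ≤ 2 * (2 * Real.pi * t)⁻¹ *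
          (Real.exp (3 * β₁ * |r|) * C * Real.exp (-((r + x) ^ 2) / (2 * t)) +
           Real.exp (3 * β₁ * |r|) * C * Real.exp (-((r - x) ^ 2) / (2 * t))) := by
          apply mul_le_mul_of_nonneg_left (add_le_add hc1 hc2) (by positivity)
      _ = g x := by rw [hg, hD]; ring
  have hnn : ∀ x : ℝ,
      0 ≤ (heatKernel t (r + x) - heatKernel t (r - x)) ^ 2 * Real.exp (3 * β₁ * |x|) := by
    intro x; positivity
  have hle := integral_mono_of_nonneg (Filter.Eventually.of_forall hnn) hg_int
    (Filter.Eventually.of_forall hbound)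
  -- compute ∫ g
  have hI1 : (∫ x : ℝ, Real.exp (-((r + x) ^ 2) / (2 * t))) = Real.sqrt (2 * Real.pi * t) := by
    have h1 : (∫ x : ℝ, Real.exp (-((r + x) ^ 2) / (2 * t))) =
        ∫ x : ℝ, Real.exp (-(2 * t)⁻¹ * (x + r) ^ 2) := by
      congr 1; funext x; rw [hform]; ring_nf
    rw [h1, integral_add_right_eq_self (fun x => Real.exp (-(2 * t)⁻¹ * x ^ 2)) r,
      integral_gaussian]
    congr 1
    field_simp
  have hI2 : (∫ x : ℝ, Real.exp (-((r - x) ^ 2) / (2 * t))) = Real.sqrt (2 * Real.pi * t) := by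
    have h1 : (∫ x : ℝ, Real.exp (-((r - x) ^ 2) / (2 * t))) =
        ∫ x : ℝ, Real.exp (-(2 * t)⁻¹ * (x - r) ^ 2) := by
      congr 1; funext x; rw [hform]; ring_nf
    rw [h1, integral_sub_right_eq_self (fun x => Real.exp (-(2 * t)⁻¹ * x ^ 2)) r,
      integral_gaussian]
    congr 1
    field_simp
  have hIg : (∫ x : ℝ, g x) = D * (2 * Real.sqrt (2 * Real.pi * t)) := by
    simp only [hg]
    rw [integral_const_mul, integral_add int1 int2, hI1, hI2]
    ring
  -- final comparison
  have hfinal : D * (2 * Real.sqrt (2 * Real.pi * t)) ≤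
      4 * C * (1 + Real.exp (3 * β₁ * |r|)) / Real.sqrt t := by
    rw [hD]
    have hst : 0 < Real.sqrt t := Real.sqrt_pos.mpr ht
    have key : (2 * Real.pi * t)⁻¹ * Real.sqrt (2 * Real.pi * t) =
        (Real.sqrt (2 * Real.pi * t))⁻¹ := by
      rw [← Real.mul_self_sqrt hπt.le]
      field_simp
      rw [Real.sqrt_sq hsπt.le]
    have h1 : (Real.sqrt (2 * Real.pi * t))⁻¹ ≤ (Real.sqrt t)⁻¹ := by
      apply inv_anti₀ hst
      apply Real.sqrt_le_sqrt
      nlinarith [Real.pi_gt_three]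
    have hEr : 0 < Real.exp (3 * β₁ * |r|) := Real.exp_pos _
    have h2 : Real.exp (3 * β₁ * |r|) ≤ 1 + Real.exp (3 * β₁ * |r|) := by linarith
    calc 2 * (2 * Real.pi * t)⁻¹ * (Real.exp (3 * β₁ * |r|) * C) *
          (2 * Real.sqrt (2 * Real.pi * t))
        = 4 * C * Real.exp (3 * β₁ * |r|) *
            ((2 * Real.pi * t)⁻¹ * Real.sqrt (2 * Real.pi * t)) := by ring
      _ = 4 * C * Real.exp (3 * β₁ * |r|) * (Real.sqrt (2 * Real.pi * t))⁻¹ := by rw [key]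
      _ ≤ 4 * C * (1 + Real.exp (3 * β₁ * |r|)) * (Real.sqrt t)⁻¹ := by
          apply mul_le_mul (by nlinarith) h1 (by positivity) (by positivity)
      _ = 4 * C * (1 + Real.exp (3 * β₁ * |r|)) / Real.sqrt t := by
          rw [div_eq_mul_inv]
  calc (∫ x : ℝ, (heatKernel t (r + x) - heatKernel t (r - x)) ^ 2 * Real.exp (3 * β₁ * |x|))
      ≤ ∫ x : ℝ, g x := hle
    _ = D * (2 * Real.sqrt (2 * Real.pi * t)) := hIg
    _ ≤ 4 * C * (1 + Real.exp (3 * β₁ * |r|)) / Real.sqrt t := hfinal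
end

section
/- Let β₀ > 0, K₁ > 0, T > 0, and let F : ℝ → ℝ be measurable with |F(x)| ≤ K₁ e^{β₀|x|} for all x ∈ ℝ. Then there exist constants K₅, K₆ (depending only on β₀, K₁, T) such that for all t ∈ (0, T] and all r ∈ ℝ, 2 |∫_ℝ (p_t(r+x) − p_t(r−x)) F(x) dx|² ≤ (1/t)(K₅ + K₆ e^{2β₀|r|}). -/
open MeasureTheory Real

lemma heatKernel_mul_exp_le (β₀ t : ℝ) (ht : 0 < t) (y : ℝ) :
    heatKernel t y * Real.exp (β₀ * |y|) ≤
      (Real.sqrt (2 * Real.pi * t))⁻¹ * Real.exp (β₀ ^ 2 * t) *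
        Real.exp (-(1 / (4 * t)) * y ^ 2) := by
  have h4 : (0 : ℝ) < 4 * t := by linarith
  have hexp : -(y ^ 2) / (2 * t) + β₀ * |y| ≤ β₀ ^ 2 * t + -(1 / (4 * t)) * y ^ 2 := by
    have hd : β₀ * |y| - β₀ ^ 2 * t ≤ y ^ 2 / (4 * t) := by
      rw [le_div_iff₀ h4]
      nlinarith [sq_nonneg (|y| - 2 * β₀ * t), sq_abs y]
    have e1 : -(y ^ 2) / (2 * t) = -(2 * (y ^ 2 / (4 * t))) := by field_simp; ring
    have e2 : -(1 / (4 * t)) * y ^ 2 = -(y ^ 2 / (4 * t)) := by field_simp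
    rw [e1, e2]
    linarith
  unfold heatKernel
  calc (Real.sqrt (2 * Real.pi * t))⁻¹ * Real.exp (-(y ^ 2) / (2 * t)) * Real.exp (β₀ * |y|)
      = (Real.sqrt (2 * Real.pi * t))⁻¹ *
        (Real.exp (-(y ^ 2) / (2 * t)) * Real.exp (β₀ * |y|)) := by ring
    _ ≤ (Real.sqrt (2 * Real.pi * t))⁻¹ *
        (Real.exp (β₀ ^ 2 * t) * Real.exp (-(1 / (4 * t)) * y ^ 2)) := by
        refine mul_le_mul_of_nonneg_left ?_ (by positivity)
        rw [← Real.exp_add, ← Real.exp_add, Real.exp_le_exp]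
        exact hexp
    _ = (Real.sqrt (2 * Real.pi * t))⁻¹ * Real.exp (β₀ ^ 2 * t) *
        Real.exp (-(1 / (4 * t)) * y ^ 2) := by ring

/-- Let `β₀ > 0`, `K₁ > 0`, `T > 0` and let `F : ℝ → ℝ` be measurable with
`|F x| ≤ K₁ e^{β₀|x|}` for all `x`.  Then there are constants `K₅, K₆` (depending only on
`β₀, K₁, T`) such that for all `t ∈ (0, T]` and all `r ∈ ℝ`,
`2 |∫_ℝ (p_t(r+x) - p_t(r-x)) F x dx|² ≤ (1/t) (K₅ + K₆ e^{2β₀|r|})`. -/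
theorem heatKernel_antisym_conv_sq_le (β₀ K₁ T : ℝ) (hβ₀ : 0 < β₀) (hK₁ : 0 < K₁) (hT : 0 < T)
    (F : ℝ → ℝ) (hFmeas : Measurable F)
    (hF : ∀ x : ℝ, |F x| ≤ K₁ * Real.exp (β₀ * |x|)) :
    ∃ K₅ K₆ : ℝ, ∀ t r : ℝ, 0 < t → t ≤ T →
      2 * |∫ x : ℝ, (heatKernel t (r + x) - heatKernel t (r - x)) * F x| ^ 2 ≤
        (1 / t) * (K₅ + K₆ * Real.exp (2 * β₀ * |r|)) := by
  set C : ℝ := 2 * Real.sqrt 2 * K₁ * Real.exp (β₀ ^ 2 * T) with hC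
  have hCpos : 0 < C := by positivity
  refine ⟨0, 2 * T * C ^ 2, ?_⟩
  intro t r ht htT
  have hb : (0 : ℝ) < 1 / (4 * t) := by positivity
  set f : ℝ → ℝ := fun y => Real.exp (-(1 / (4 * t)) * y ^ 2) with hfdef
  have hfint : Integrable f := integrable_exp_neg_mul_sq hb
  have h1 : Integrable (fun x : ℝ => f (r + x)) := hfint.comp_add_left r
  have h2 : Integrable (fun x : ℝ => f (r - x)) := hfint.comp_sub_left r
  set A : ℝ := K₁ * Real.exp (β₀ * |r|) * ((Real.sqrt (2 * Real.pi * t))⁻¹ *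
    Real.exp (β₀ ^ 2 * t)) with hA
  have hApos : 0 < A := by positivity
  set g : ℝ → ℝ := fun x => A * (f (r + x) + f (r - x)) with hg
  have hgint : Integrable g := (h1.add h2).const_mul A
  -- a helper pointwise bound
  have step : ∀ x y : ℝ, |x| ≤ |r| + |y| →
      K₁ * (heatKernel t y * Real.exp (β₀ * |x|)) ≤ A * f y := by
    intro x y hy
    have e1 : heatKernel t y * Real.exp (β₀ * |x|) ≤
        Real.exp (β₀ * |r|) * (heatKernel t y * Real.exp (β₀ * |y|)) := by
      rw [show Real.exp (β₀ * |r|) * (heatKernel t y * Real.exp (β₀ * |y|)) =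
        heatKernel t y * (Real.exp (β₀ * |r|) * Real.exp (β₀ * |y|)) by ring, ← Real.exp_add]
      refine mul_le_mul_of_nonneg_left ?_ (heatKernel_nonneg t y)
      rw [Real.exp_le_exp]
      nlinarith [hβ₀.le]
    have e2 := heatKernel_mul_exp_le β₀ t ht y
    calc K₁ * (heatKernel t y * Real.exp (β₀ * |x|))
        ≤ K₁ * (Real.exp (β₀ * |r|) * (heatKernel t y * Real.exp (β₀ * |y|))) :=
          mul_le_mul_of_nonneg_left e1 hK₁.le
      _ ≤ K₁ * (Real.exp (β₀ * |r|) * ((Real.sqrt (2 * Real.pi * t))⁻¹ *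
            Real.exp (β₀ ^ 2 * t) * f y)) :=
          mul_le_mul_of_nonneg_left
            (mul_le_mul_of_nonneg_left e2 (Real.exp_nonneg _)) hK₁.le
      _ = A * f y := by rw [hA]; ring
  have hpt : ∀ x : ℝ, |(heatKernel t (r + x) - heatKernel t (r - x)) * F x| ≤ g x := by
    intro x
    have hx1 : |x| ≤ |r| + |r + x| := by
      have h := abs_sub_abs_le_abs_sub x (r + x)
      rw [show x - (r + x) = -r by ring, abs_neg] at h
      linarith
    have hx2 : |x| ≤ |r| + |r - x| := by
      calc |x| = |r + -(r - x)| := by congr 1; ring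
        _ ≤ |r| + |-(r - x)| := abs_add_le _ _
        _ = |r| + |r - x| := by rw [abs_neg]
    have habs : |heatKernel t (r + x) - heatKernel t (r - x)| ≤
        heatKernel t (r + x) + heatKernel t (r - x) := by
      rw [sub_eq_add_neg]
      refine (abs_add_le _ _).trans ?_
      rw [abs_neg, abs_of_nonneg (heatKernel_nonneg _ _), abs_of_nonneg (heatKernel_nonneg _ _)]
    calc |(heatKernel t (r + x) - heatKernel t (r - x)) * F x|
        = |heatKernel t (r + x) - heatKernel t (r - x)| * |F x| := abs_mul _ _
      _ ≤ (heatKernel t (r + x) + heatKernel t (r - x)) * (K₁ * Real.exp (β₀ * |x|)) := by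
          refine mul_le_mul habs (hF x) (abs_nonneg _) ?_
          have := heatKernel_nonneg t (r + x); have := heatKernel_nonneg t (r - x); linarith
      _ = K₁ * (heatKernel t (r + x) * Real.exp (β₀ * |x|)) +
            K₁ * (heatKernel t (r - x) * Real.exp (β₀ * |x|)) := by ring
      _ ≤ A * f (r + x) + A * f (r - x) := add_le_add (step x (r + x) hx1) (step x (r - x) hx2)
      _ = g x := by simp only [hg]; ring
  -- bound on the integral
  have hIle : |∫ x : ℝ, (heatKernel t (r + x) - heatKernel t (r - x)) * F x| ≤ ∫ x : ℝ, g x := by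
    have hn := norm_integral_le_integral_norm
      (fun x : ℝ => (heatKernel t (r + x) - heatKernel t (r - x)) * F x) (μ := volume)
    simp only [Real.norm_eq_abs] at hn
    refine hn.trans ?_
    exact integral_mono_of_nonneg (Filter.Eventually.of_forall fun x => abs_nonneg _) hgint
      (Filter.Eventually.of_forall hpt)
  have hs : (0 : ℝ) < Real.sqrt (2 * Real.pi * t) := Real.sqrt_pos.2 (by positivity)
  have hgval : ∫ x : ℝ, g x = A * (2 * (Real.sqrt 2 * Real.sqrt (2 * Real.pi * t))) := by
    simp only [hg]
    rw [MeasureTheory.integral_const_mul, integral_add h1 h2]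
    have e1 : ∫ x : ℝ, f (r + x) = ∫ x : ℝ, f x := integral_add_left_eq_self f r
    have e2 : ∫ x : ℝ, f (r - x) = ∫ x : ℝ, f x := integral_sub_left_eq_self f volume r
    rw [e1, e2, hfdef]
    rw [integral_gaussian]
    have : Real.pi / (1 / (4 * t)) = 2 * (2 * Real.pi * t) := by field_simp; ring
    rw [this, Real.sqrt_mul (by norm_num : (0:ℝ) ≤ 2)]
    ring
  have hIb : |∫ x : ℝ, (heatKernel t (r + x) - heatKernel t (r - x)) * F x| ≤
      C * Real.exp (β₀ * |r|) := by
    refine hIle.trans ?_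
    rw [hgval, hA]
    have hval : K₁ * Real.exp (β₀ * |r|) * ((Real.sqrt (2 * Real.pi * t))⁻¹ *
        Real.exp (β₀ ^ 2 * t)) * (2 * (Real.sqrt 2 * Real.sqrt (2 * Real.pi * t))) =
        2 * Real.sqrt 2 * K₁ * Real.exp (β₀ ^ 2 * t) * Real.exp (β₀ * |r|) := by
      field_simp
    rw [hval, hC]
    gcongr
  -- conclude
  set I : ℝ := |∫ x : ℝ, (heatKernel t (r + x) - heatKernel t (r - x)) * F x| with hI
  have hsq : I ^ 2 ≤ (C * Real.exp (β₀ * |r|)) ^ 2 := pow_le_pow_left₀ (abs_nonneg _) hIb 2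
  have hexp2 : Real.exp (β₀ * |r|) ^ 2 = Real.exp (2 * β₀ * |r|) := by
    rw [sq, ← Real.exp_add]; congr 1; ring
  calc 2 * I ^ 2 ≤ 2 * (C * Real.exp (β₀ * |r|)) ^ 2 := by linarith
    _ = 2 * C ^ 2 * Real.exp (2 * β₀ * |r|) := by rw [mul_pow, hexp2]; ring
    _ ≤ (1 / t) * (0 + 2 * T * C ^ 2 * Real.exp (2 * β₀ * |r|)) := by
        rw [zero_add]
        have h1t : 1 ≤ T / t := (one_le_div ht).2 htT
        have heq : (1 / t) * (2 * T * C ^ 2 * Real.exp (2 * β₀ * |r|)) =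
            (T / t) * (2 * C ^ 2 * Real.exp (2 * β₀ * |r|)) := by
          field_simp
        rw [heq]
        exact le_mul_of_one_le_left (by positivity) h1t
end
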